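/- arXiv:1508.01009 — 2 statements merged into one kernel-verified Lean document; each statement's English description precedes it below -/
import Mathlib

section
/- For all a ≥ 0, x ≥ 0, and n ≥ 1, B_n^a(t²; x) = x²/n + x/n + x² + a²x²/(n²(1+x)²) + 2ax²/(n(1+x)) + ax/(n²(1+x)). -/
noncomputable def rising (n i : ℕ) : ℝ := ∏ j ∈ Finset.range i, ((n : ℝ) + j)

noncomputable def pk (n : ℕ) (a : ℝ) (k : ℕ) : ℝ :=
  ∑ i ∈ Finset.range (k + 1), (k.choose i : ℝ) * rising n i * a ^ (k - i)

noncomputable def W (n : ℕ) (a x : ℝ) (k : ℕ) : ℝ :=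
  Real.exp (-(a * x) / (1 + x)) * (pk n a k / (k.factorial : ℝ)) * x ^ k / (1 + x) ^ (k + n)

/-- Cauchy product for nonnegative real series. -/
lemma cauchyR {f g : ℕ → ℝ} {A B : ℝ} (hf0 : ∀ i, 0 ≤ f i) (hg0 : ∀ j, 0 ≤ g j)
    (hf : HasSum f A) (hg : HasSum g B) :
    HasSum (fun k => ∑ i ∈ Finset.range (k + 1), f i * g (k - i)) (A * B) := by
  have hf' : Summable fun i => ‖f i‖ :=
    hf.summable.congr fun i => (Real.norm_of_nonneg (hf0 i)).symm
  have hg' : Summable fun j => ‖g j‖ :=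
    hg.summable.congr fun j => (Real.norm_of_nonneg (hg0 j)).symm
  have hs := (summable_norm_sum_mul_range_of_summable_norm hf' hg').of_norm
  have ht := tsum_mul_tsum_eq_tsum_sum_range_of_summable_norm hf' hg'
  rw [hf.tsum_eq, hg.tsum_eq] at ht
  exact ht ▸ hs.hasSum

lemma chooseId (m i : ℕ) :
    (i + 1) * (m + 1 + i).choose (i + 1) = (m + 1) * (m + 1 + i).choose i := by
  have h1 := Nat.add_one_mul_choose_eq (m + i) i
  have h2 := Nat.add_one_mul_choose_eq (m + i) m
  simp only [Nat.succ_eq_add_one, show m + i + 1 = m + 1 + i by omega] at h1 h2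
  have e1 : (m + i).choose i = (m + i).choose m := by
    rw [Nat.add_comm m i, Nat.choose_symm_add]
  have e2 : (m + 1 + i).choose (m + 1) = (m + 1 + i).choose i :=
    Nat.choose_symm_add
  have A : (i + 1) * (m + 1 + i).choose (i + 1) = (m + 1 + i) * (m + i).choose i := by
    rw [mul_comm]; exact h1.symm
  have B : (m + 1) * (m + 1 + i).choose i = (m + 1 + i) * (m + i).choose m := by
    rw [mul_comm, ← e2]; exact h2.symm
  rw [A, B, e1]

lemma chooseIdR (m i : ℕ) :
    ((i : ℝ) + 1) * (((m + 1 + i).choose (i + 1) : ℕ) : ℝ)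
      = ((m : ℝ) + 1) * (((m + 1 + i).choose i : ℕ) : ℝ) := by
  exact_mod_cast congrArg (Nat.cast : ℕ → ℝ) (chooseId m i)

lemma rising_eq (n : ℕ) (hn : 1 ≤ n) (i : ℕ) :
    rising n i = ((n - 1 + i).choose i : ℝ) * (i.factorial : ℝ) := by
  induction i with
  | zero => simp [rising]
  | succ i ih =>
    have hstep : rising n (i + 1) = rising n i * ((n : ℝ) + i) := by
      simp [rising, Finset.prod_range_succ]
    rw [hstep, ih]
    have key : (i + 1) * (n + i).choose (i + 1) = (n + i) * (n - 1 + i).choose i := by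
      have h := Nat.add_one_mul_choose_eq (n - 1 + i) i
      have e : n - 1 + i + 1 = n + i := by omega
      rw [e] at h
      rw [mul_comm ((n + i).choose (i + 1)) (i + 1)] at h
      omega
    have keyR : ((i : ℝ) + 1) * (((n + i).choose (i + 1) : ℕ) : ℝ)
        = ((n : ℝ) + (i : ℝ)) * (((n - 1 + i).choose i : ℕ) : ℝ) := by
      exact_mod_cast congrArg (Nat.cast : ℕ → ℝ) key
    rw [show n - 1 + (i + 1) = n + i by omega, Nat.factorial_succ]
    push_cast
    linear_combination (-(i.factorial : ℝ)) * keyR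

/-- negative binomial series -/
lemma nb0 {r : ℝ} (h0 : 0 ≤ r) (h1 : r < 1) (m : ℕ) :
    HasSum (fun i => (((m + i).choose i : ℕ) : ℝ) * r ^ i) (1 / (1 - r) ^ (m + 1)) := by
  induction m with
  | zero => simpa using hasSum_geometric_of_lt_one h0 h1
  | succ m ih =>
    have hgeo := hasSum_geometric_of_lt_one h0 h1
    have h := cauchyR (f := fun i => (((m + i).choose i : ℕ) : ℝ) * r ^ i)
      (g := fun j => r ^ j) (fun i => by positivity) (fun j => by positivity) ih hgeo
    have heq : (fun k => ∑ i ∈ Finset.range (k + 1),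
        ((((m + i).choose i : ℕ) : ℝ) * r ^ i) * r ^ (k - i))
        = fun k => (((m + 1 + k).choose k : ℕ) : ℝ) * r ^ k := by
      funext k
      have hterm : ∀ i ∈ Finset.range (k + 1),
          ((((m + i).choose i : ℕ) : ℝ) * r ^ i) * r ^ (k - i)
          = (((m + i).choose i : ℕ) : ℝ) * r ^ k := fun i hi => by
        rw [Finset.mem_range] at hi
        rw [mul_assoc, ← pow_add, Nat.add_sub_cancel' (Nat.lt_succ_iff.mp hi)]
      rw [Finset.sum_congr rfl hterm, ← Finset.sum_mul, ← Nat.cast_sum]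
      congr 2
      calc ∑ i ∈ Finset.range (k + 1), (m + i).choose i
          = ∑ i ∈ Finset.range (k + 1), (i + m).choose m := by
            refine Finset.sum_congr rfl fun i _ => ?_
            rw [Nat.add_comm m i, Nat.choose_symm_add]
        _ = (k + m + 1).choose (m + 1) := Nat.sum_range_add_choose k m
        _ = (m + 1 + k).choose k := by
            rw [show k + m + 1 = (m + 1) + k by omega, Nat.choose_symm_add]
    rw [heq] at h
    have h2 : 1 / (1 - r) ^ (m + 1) * (1 - r)⁻¹ = 1 / (1 - r) ^ (m + 1 + 1) := by
      rw [one_div, one_div, ← mul_inv, ← pow_succ]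
    rwa [h2] at h

lemma nb1 {r : ℝ} (h0 : 0 ≤ r) (h1 : r < 1) (m : ℕ) :
    HasSum (fun i : ℕ => (i : ℝ) * (((m + i).choose i : ℕ) : ℝ) * r ^ i)
      ((m + 1) * r / (1 - r) ^ (m + 2)) := by
  have h := (nb0 h0 h1 (m + 1)).mul_left (((m : ℝ) + 1) * r)
  have heq : (fun i => ((m : ℝ) + 1) * r * ((((m + 1 + i).choose i : ℕ) : ℝ) * r ^ i))
      = fun i => ((i + 1 : ℕ) : ℝ) * (((m + (i + 1)).choose (i + 1) : ℕ) : ℝ) * r ^ (i + 1) := by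
    funext i
    rw [show m + (i + 1) = m + 1 + i by omega, pow_succ]
    push_cast
    linear_combination (-(r ^ i * r)) * (chooseIdR m i)
  rw [heq] at h
  have h' := (hasSum_nat_add_iff
    (f := fun i : ℕ => (i : ℝ) * (((m + i).choose i : ℕ) : ℝ) * r ^ i) 1).mp h
  simp only [Finset.range_one, Finset.sum_singleton, Nat.cast_zero, zero_mul, add_zero] at h'
  have : ((m : ℝ) + 1) * r * (1 / (1 - r) ^ (m + 1 + 1)) = ((m : ℝ) + 1) * r / (1 - r) ^ (m + 2) := by
    rw [mul_one_div, show m + 1 + 1 = m + 2 from rfl]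
  rwa [this] at h'

lemma nb2 {r : ℝ} (h0 : 0 ≤ r) (h1 : r < 1) (m : ℕ) :
    HasSum (fun i : ℕ => (i : ℝ) ^ 2 * (((m + i).choose i : ℕ) : ℝ) * r ^ i)
      ((m + 1) * r * ((m + 2) * r / (1 - r) ^ (m + 3) + 1 / (1 - r) ^ (m + 2))) := by
  have hadd := ((nb1 h0 h1 (m + 1)).add (nb0 h0 h1 (m + 1))).mul_left (((m : ℝ) + 1) * r)
  have heq : (fun i : ℕ => ((m : ℝ) + 1) * r *
        ((i : ℝ) * (((m + 1 + i).choose i : ℕ) : ℝ) * r ^ i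
          + (((m + 1 + i).choose i : ℕ) : ℝ) * r ^ i))
      = fun i => ((i + 1 : ℕ) : ℝ) ^ 2 * (((m + (i + 1)).choose (i + 1) : ℕ) : ℝ) * r ^ (i + 1) := by
    funext i
    rw [show m + (i + 1) = m + 1 + i by omega, pow_succ]
    push_cast
    linear_combination (-(((i : ℝ) + 1) * r ^ i * r)) * (chooseIdR m i)
  rw [heq] at hadd
  have h' := (hasSum_nat_add_iff
    (f := fun i : ℕ => (i : ℝ) ^ 2 * (((m + i).choose i : ℕ) : ℝ) * r ^ i) 1).mp hadd
  simp only [Finset.range_one, Finset.sum_singleton, Nat.cast_zero, ne_eq,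
    OfNat.ofNat_ne_zero, not_false_iff, zero_pow, zero_mul, add_zero] at h'
  have : ((m : ℝ) + 1) * r * (((m : ℝ) + 1 + 1) * r / (1 - r) ^ (m + 1 + 2)
        + 1 / (1 - r) ^ (m + 1 + 1))
      = ((m : ℝ) + 1) * r * (((m : ℝ) + 2) * r / (1 - r) ^ (m + 3) + 1 / (1 - r) ^ (m + 2)) := by
    rw [show m + 1 + 2 = m + 3 from rfl, show m + 1 + 1 = m + 2 from rfl]
    ring
  push_cast at h'
  rwa [this] at h'


noncomputable def Pb (y : ℝ) (j : ℕ) : ℝ := Real.exp (-y) * y ^ j / j.factorial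

lemma Pb_nonneg {y : ℝ} (hy : 0 ≤ y) (j : ℕ) : 0 ≤ Pb y j :=
  div_nonneg (mul_nonneg (Real.exp_pos _).le (pow_nonneg hy j)) (Nat.cast_nonneg _)

lemma hasSum_Pb0 (y : ℝ) : HasSum (Pb y) 1 := by
  have h := NormedSpace.expSeries_div_hasSum_exp y
  rw [← Real.exp_eq_exp_ℝ] at h
  have h2 := h.mul_left (Real.exp (-y))
  simp only [← mul_div_assoc] at h2
  rw [← Real.exp_add, neg_add_cancel, Real.exp_zero] at h2
  exact h2

lemma hasSum_Pb1 (y : ℝ) : HasSum (fun j : ℕ => Pb y j * j) y := by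
  have h := (hasSum_Pb0 y).mul_left y
  have heq : (fun j : ℕ => y * Pb y j)
      = fun j : ℕ => Pb y (j + 1) * ((j + 1 : ℕ) : ℝ) := by
    funext j
    have hf : (j.factorial : ℝ) ≠ 0 := Nat.cast_ne_zero.mpr (Nat.factorial_ne_zero j)
    simp only [Pb, Nat.factorial_succ, pow_succ]
    push_cast
    field_simp
  rw [heq] at h
  have h' := (hasSum_nat_add_iff (f := fun j : ℕ => Pb y j * (j : ℝ)) 1).mp h
  simp only [Finset.range_one, Finset.sum_singleton, Nat.cast_zero, mul_zero, add_zero] at h'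
  rwa [mul_one] at h'

lemma hasSum_Pb2 (y : ℝ) : HasSum (fun j : ℕ => Pb y j * (j : ℝ) ^ 2) (y + y ^ 2) := by
  have h := ((hasSum_Pb1 y).add (hasSum_Pb0 y)).mul_left y
  have heq : (fun j : ℕ => y * (Pb y j * (j : ℝ) + Pb y j))
      = fun j : ℕ => Pb y (j + 1) * ((j + 1 : ℕ) : ℝ) ^ 2 := by
    funext j
    have hf : (j.factorial : ℝ) ≠ 0 := Nat.cast_ne_zero.mpr (Nat.factorial_ne_zero j)
    simp only [Pb, Nat.factorial_succ, pow_succ]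
    push_cast
    field_simp
  rw [heq] at h
  have h' := (hasSum_nat_add_iff (f := fun j : ℕ => Pb y j * (j : ℝ) ^ 2) 1).mp h
  simp only [Finset.range_one, Finset.sum_singleton, Nat.cast_zero, ne_eq,
    OfNat.ofNat_ne_zero, not_false_iff, zero_pow, mul_zero, add_zero] at h'
  have : y * (y + 1) = y + y ^ 2 := by ring
  rwa [this] at h'

noncomputable def Vb (n : ℕ) (x : ℝ) (i : ℕ) : ℝ :=
  (((n - 1 + i).choose i : ℕ) : ℝ) * (x / (1 + x)) ^ i * (1 - x / (1 + x)) ^ n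

section Vb
variable {x : ℝ} {n : ℕ}

lemma Vb_nonneg (hx : 0 ≤ x) (i : ℕ) : 0 ≤ Vb n x i := by
  have hx1 : (0 : ℝ) < 1 + x := by linarith
  have h1 : (0:ℝ) ≤ x / (1 + x) := by positivity
  have h2 : (0:ℝ) ≤ 1 - x / (1 + x) := by
    rw [sub_nonneg, div_le_one hx1]; linarith
  exact mul_nonneg (mul_nonneg (Nat.cast_nonneg _) (pow_nonneg h1 i)) (pow_nonneg h2 n)

lemma aux_facts (hx : 0 ≤ x) :
    (0 : ℝ) < 1 + x ∧ 0 ≤ x / (1 + x) ∧ x / (1 + x) < 1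
      ∧ (1 : ℝ) - x / (1 + x) = 1 / (1 + x) := by
  have hx1 : (0 : ℝ) < 1 + x := by linarith
  refine ⟨hx1, by positivity, by rw [div_lt_one hx1]; linarith, by field_simp; ring⟩

lemma hasSum_Vb0 (hx : 0 ≤ x) (hn : 1 ≤ n) : HasSum (Vb n x) 1 := by
  obtain ⟨hx1, hr0, hr1, h1r⟩ := aux_facts hx
  have h := (nb0 hr0 hr1 (n - 1)).mul_right ((1 - x / (1 + x)) ^ n)
  rw [show n - 1 + 1 = n by omega] at h
  have e : 1 / (1 - x / (1 + x)) ^ n * (1 - x / (1 + x)) ^ n = 1 := by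
    rw [h1r]
    have : (1 : ℝ) / (1 + x) ≠ 0 := by positivity
    field_simp
  rw [e] at h
  exact h

lemma hasSum_Vb1 (hx : 0 ≤ x) (hn : 1 ≤ n) :
    HasSum (fun i : ℕ => Vb n x i * i) ((n : ℝ) * x) := by
  obtain ⟨hx1, hr0, hr1, h1r⟩ := aux_facts hx
  have h := (nb1 hr0 hr1 (n - 1)).mul_right ((1 - x / (1 + x)) ^ n)
  have hfun : (fun i : ℕ => (i : ℝ) * (((n - 1 + i).choose i : ℕ) : ℝ) * (x / (1 + x)) ^ i
        * (1 - x / (1 + x)) ^ n) = fun i : ℕ => Vb n x i * i := by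
    funext i; simp only [Vb]; ring
  rw [hfun] at h
  have hc : ((n - 1 : ℕ) : ℝ) + 1 = (n : ℝ) := by
    rw [Nat.cast_sub hn]; simp
  have e : (((n - 1 : ℕ) : ℝ) + 1) * (x / (1 + x)) / (1 - x / (1 + x)) ^ (n - 1 + 2)
      * (1 - x / (1 + x)) ^ n = (n : ℝ) * x := by
    rw [hc, h1r, show n - 1 + 2 = n + 1 by omega, pow_succ]
    have h1 : ((1 : ℝ) / (1 + x)) ^ n ≠ 0 := by positivity
    field_simp
  rw [e] at h
  exact h

lemma hasSum_Vb2 (hx : 0 ≤ x) (hn : 1 ≤ n) :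
    HasSum (fun i : ℕ => Vb n x i * (i : ℝ) ^ 2)
      ((n : ℝ) * x + (n : ℝ) * ((n : ℝ) + 1) * x ^ 2) := by
  obtain ⟨hx1, hr0, hr1, h1r⟩ := aux_facts hx
  have h := (nb2 hr0 hr1 (n - 1)).mul_right ((1 - x / (1 + x)) ^ n)
  have hfun : (fun i : ℕ => (i : ℝ) ^ 2 * (((n - 1 + i).choose i : ℕ) : ℝ) * (x / (1 + x)) ^ i
        * (1 - x / (1 + x)) ^ n) = fun i : ℕ => Vb n x i * (i : ℝ) ^ 2 := by
    funext i; simp only [Vb]; ring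
  rw [hfun] at h
  have hc : ((n - 1 : ℕ) : ℝ) + 1 = (n : ℝ) := by
    rw [Nat.cast_sub hn]; simp
  have hc2 : ((n - 1 : ℕ) : ℝ) + 2 = (n : ℝ) + 1 := by
    rw [Nat.cast_sub hn]; push_cast; ring
  have e : (((n - 1 : ℕ) : ℝ) + 1) * (x / (1 + x)) * ((((n - 1 : ℕ) : ℝ) + 2) * (x / (1 + x))
        / (1 - x / (1 + x)) ^ (n - 1 + 3) + 1 / (1 - x / (1 + x)) ^ (n - 1 + 2))
      * (1 - x / (1 + x)) ^ n
      = (n : ℝ) * x + (n : ℝ) * ((n : ℝ) + 1) * x ^ 2 := by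
    rw [hc, hc2, h1r, show n - 1 + 3 = n + 2 by omega, show n - 1 + 2 = n + 1 by omega,
      pow_succ, pow_succ, pow_succ]
    have h1 : ((1 : ℝ) / (1 + x)) ^ n ≠ 0 := by positivity
    field_simp
    first
    | ring1
    | (left; first | ring1 | trivial)
    | tauto
  rw [e] at h
  exact h

end Vb

lemma W_eq_conv (a x : ℝ) (hx : 0 ≤ x) (n : ℕ) (hn : 1 ≤ n) (k : ℕ) :
    W n a x k = ∑ i ∈ Finset.range (k + 1), Vb n x i * Pb (a * x / (1 + x)) (k - i) := by
  have hx1 : (0 : ℝ) < 1 + x := by linarith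
  rw [W, pk, Finset.sum_div, Finset.mul_sum, Finset.sum_mul, Finset.sum_div]
  refine Finset.sum_congr rfl fun i hi => ?_
  rw [Finset.mem_range, Nat.lt_succ_iff] at hi
  have hexp : -(a * x) / (1 + x) = -(a * x / (1 + x)) := by ring
  have hfact : (k.factorial : ℝ)
      = (k.choose i : ℝ) * (i.factorial : ℝ) * ((k - i).factorial : ℝ) := by
    exact_mod_cast congrArg (Nat.cast : ℕ → ℝ) (Nat.choose_mul_factorial_mul_factorial hi).symm
  have hxk : x ^ k = x ^ i * x ^ (k - i) := by
    rw [← pow_add, Nat.add_sub_cancel' hi]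
  have hXk : (1 + x) ^ (k + n) = (1 + x) ^ i * (1 + x) ^ (k - i) * (1 + x) ^ n := by
    rw [← pow_add, ← pow_add]
    congr 1
    omega
  rw [rising_eq n hn i, hexp, hfact, hxk, hXk]
  simp only [Vb, Pb]
  have hine : (i.factorial : ℝ) ≠ 0 := Nat.cast_ne_zero.mpr (Nat.factorial_ne_zero i)
  have hkine : ((k - i).factorial : ℝ) ≠ 0 := Nat.cast_ne_zero.mpr (Nat.factorial_ne_zero _)
  have hcne : (k.choose i : ℝ) ≠ 0 :=
    Nat.cast_ne_zero.mpr (Nat.choose_pos hi).ne'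
  have h1r : (1 : ℝ) - x / (1 + x) = 1 / (1 + x) := by field_simp; ring
  rw [h1r]
  simp only [div_pow, mul_pow, one_pow]
  field_simp

set_option maxHeartbeats 1600000 in
theorem baskakov_second_moment (a x : ℝ) (ha : 0 ≤ a) (hx : 0 ≤ x)
    (n : ℕ) (hn : 1 ≤ n) :
    ∑' k : ℕ, W n a x k * ((k : ℝ) / n) ^ 2 =
      x ^ 2 / n + x / n + x ^ 2 + a ^ 2 * x ^ 2 / (n ^ 2 * (1 + x) ^ 2)
        + 2 * a * x ^ 2 / (n * (1 + x)) + a * x / (n ^ 2 * (1 + x)) := by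
  have hx1 : (0 : ℝ) < 1 + x := by linarith
  have hy0 : 0 ≤ a * x / (1 + x) := by positivity
  set y : ℝ := a * x / (1 + x) with hy
  -- component sums
  have hF := cauchyR (f := fun i : ℕ => Vb n x i * (i : ℝ) ^ 2) (g := Pb y)
      (fun i => mul_nonneg (Vb_nonneg hx i) (sq_nonneg _))
      (fun j => Pb_nonneg hy0 j) (hasSum_Vb2 hx hn) (hasSum_Pb0 y)
  have hG := cauchyR (f := fun i : ℕ => Vb n x i * (i : ℝ))
      (g := fun j : ℕ => Pb y j * (j : ℝ))
      (fun i => mul_nonneg (Vb_nonneg hx i) (Nat.cast_nonneg _))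
      (fun j => mul_nonneg (Pb_nonneg hy0 j) (Nat.cast_nonneg _))
      (hasSum_Vb1 hx hn) (hasSum_Pb1 y)
  have hH := cauchyR (f := Vb n x)
      (g := fun j : ℕ => Pb y j * (j : ℝ) ^ 2)
      (fun i => Vb_nonneg hx i)
      (fun j => mul_nonneg (Pb_nonneg hy0 j) (sq_nonneg _))
      (hasSum_Vb0 hx hn) (hasSum_Pb2 y)
  have hsum := (hF.add ((hG.mul_left 2).add hH)).div_const ((n : ℝ) ^ 2)
  have hkey : ∀ k : ℕ,
      ((∑ i ∈ Finset.range (k + 1), (Vb n x i * (i : ℝ) ^ 2) * Pb y (k - i))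
        + (2 * (∑ i ∈ Finset.range (k + 1),
            (Vb n x i * (i : ℝ)) * (Pb y (k - i) * ((k - i : ℕ) : ℝ)))
          + ∑ i ∈ Finset.range (k + 1),
            Vb n x i * (Pb y (k - i) * ((k - i : ℕ) : ℝ) ^ 2))) / (n : ℝ) ^ 2
      = W n a x k * ((k : ℝ) / n) ^ 2 := by
    intro k
    rw [W_eq_conv a x hx n hn k, ← hy]
    rw [div_pow]
    simp only [← mul_div_assoc]
    congr 1
    rw [Finset.sum_mul, Finset.mul_sum, ← Finset.sum_add_distrib, ← Finset.sum_add_distrib]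
    refine Finset.sum_congr rfl fun i hi => ?_
    rw [Finset.mem_range, Nat.lt_succ_iff] at hi
    have hk : (k : ℝ) = (i : ℝ) + ((k - i : ℕ) : ℝ) := by
      rw [Nat.cast_sub hi]; ring
    rw [hk]
    ring
  have hfe : (fun k : ℕ => W n a x k * ((k : ℝ) / n) ^ 2)
      = fun k : ℕ => ((∑ i ∈ Finset.range (k + 1), (Vb n x i * (i : ℝ) ^ 2) * Pb y (k - i))
        + (2 * (∑ i ∈ Finset.range (k + 1),
            (Vb n x i * (i : ℝ)) * (Pb y (k - i) * ((k - i : ℕ) : ℝ)))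
          + ∑ i ∈ Finset.range (k + 1),
            Vb n x i * (Pb y (k - i) * ((k - i : ℕ) : ℝ) ^ 2))) / (n : ℝ) ^ 2 :=
    funext fun k => (hkey k).symm
  have hsum2 : HasSum (fun k : ℕ => W n a x k * ((k : ℝ) / n) ^ 2)
      ((((n : ℝ) * x + (n : ℝ) * ((n : ℝ) + 1) * x ^ 2) * 1
        + (2 * (((n : ℝ) * x) * y) + 1 * (y + y ^ 2))) / (n : ℝ) ^ 2) := by
    rw [hfe]; exact hsum
  rw [hsum2.tsum_eq]
  have hn0 : (n : ℝ) ≠ 0 := Nat.cast_ne_zero.mpr (by omega)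
  rw [hy]
  field_simp
  ring
end

section
/- (Voronovskaya-type theorem) Let f ∈ C²[0,∞) be bounded with bounded, uniformly continuous second derivative, and fix a ≥ 0, x ≥ 0, 0 ≤ α ≤ β. Then lim_{n→∞} n·(L_{n,a}^{α,β}(f;x) − f(x)) = (α − βx + ax/(1+x))·f'(x) + ((x²+x)/2)·f''(x). -/
noncomputable def L (n : ℕ) (a α β : ℝ) (f : ℝ → ℝ) (x : ℝ) : ℝ :=
  ∑' k : ℕ, W n a x k * f (((k : ℝ) + α) / ((n : ℝ) + β))

lemma rising_zero (n : ℕ) : rising n 0 = 1 := by simp [rising]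

lemma rising_succ (n i : ℕ) : rising n (i+1) = rising n i * ((n:ℝ) + i) := by
  simp [rising, Finset.prod_range_succ]

lemma rising_succ' (n i : ℕ) : rising n (i+1) = (n:ℝ) * rising (n+1) i := by
  rw [rising, Finset.prod_range_succ']
  simp only [Nat.cast_zero, add_zero, rising]
  rw [mul_comm]
  congr 1
  apply Finset.prod_congr rfl
  intro j _
  push_cast; ring

lemma rising_nonneg (n i : ℕ) : 0 ≤ rising n i := by
  apply Finset.prod_nonneg; intro j _; positivity

lemma rising_mul_factorial (m i : ℕ) : rising (m+1) i * (m.factorial : ℝ) = ((m+i).factorial : ℝ) := by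
  induction i with
  | zero => simp [rising_zero]
  | succ i ih =>
      rw [rising_succ, show m + (i+1) = (m+i) + 1 by omega, Nat.factorial_succ]
      rw [mul_right_comm, ih]
      push_cast; ring

lemma pk_nonneg (n : ℕ) {a : ℝ} (ha : 0 ≤ a) (k : ℕ) : 0 ≤ pk n a k := by
  apply Finset.sum_nonneg; intro i _
  have := rising_nonneg n i
  positivity

lemma W_nonneg (n : ℕ) {a x : ℝ} (ha : 0 ≤ a) (hx : 0 ≤ x) (k : ℕ) : 0 ≤ W n a x k := by
  have h1 : (0:ℝ) < 1 + x := by linarith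
  have := pk_nonneg n ha k
  have : (0:ℝ) ≤ pk n a k / (k.factorial : ℝ) := by positivity
  unfold W
  positivity

lemma hasSum_rising (n : ℕ) {t : ℝ} (h0 : 0 ≤ t) (h1 : t < 1) :
    HasSum (fun i => rising n i * t ^ i / (i.factorial : ℝ)) (1 / (1 - t) ^ n) := by
  cases n with
  | zero =>
      have : (fun i => rising 0 i * t ^ i / (i.factorial : ℝ)) =
          (fun i => if i = 0 then (1:ℝ) else 0) := by
        funext i
        cases i with
        | zero => simp [rising_zero]
        | succ i =>
            have : rising 0 (i+1) = 0 := by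
              rw [rising, Finset.prod_range_succ']
              simp
            simp [this]
      rw [this]
      simpa using hasSum_ite_eq (0 : ℕ) (1:ℝ)
  | succ m =>
      have hr : ‖t‖ < 1 := by rw [Real.norm_eq_abs, abs_of_nonneg h0]; exact h1
      have h := hasSum_choose_mul_geometric_of_norm_lt_one (𝕜 := ℝ) m hr
      convert h using 2 with i
      case e'_3 => rfl
      case e'_5 =>
        have hfac : rising (m+1) i * (m.factorial : ℝ) = ((m+i).factorial : ℝ) :=
          rising_mul_factorial m i
        have hch : ((i+m).choose m : ℝ) * (m.factorial : ℝ) * (i.factorial : ℝ)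
            = ((i+m).factorial : ℝ) := by
          have := Nat.choose_mul_factorial_mul_factorial (Nat.le_add_left m i)
          simp only [Nat.add_sub_cancel] at this
          exact_mod_cast this
        have hm : (m.factorial : ℝ) ≠ 0 := by positivity
        have hi : (i.factorial : ℝ) ≠ 0 := by positivity
        rw [show m + i = i + m by omega] at hfac
        have hr2 : rising (m+1) i = ((i+m).choose m : ℝ) * (i.factorial : ℝ) := by
          have h2 : rising (m+1) i * (m.factorial : ℝ) =
              ((i+m).choose m : ℝ) * (m.factorial : ℝ) * (i.factorial : ℝ) := by
            rw [hfac, hch]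
          exact mul_right_cancel₀ hm (by linarith [h2])
        rw [hr2]
        field_simp

lemma hasSum_exp_series (y : ℝ) :
    HasSum (fun j => y ^ j / (j.factorial : ℝ)) (Real.exp y) := by
  rw [Real.exp_eq_exp_ℝ]
  exact NormedSpace.expSeries_div_hasSum_exp y

lemma pk_series (n : ℕ) {a x : ℝ} (ha : 0 ≤ a) (hx : 0 ≤ x) :
    HasSum (fun k => pk n a k * (x/(1+x)) ^ k / (k.factorial : ℝ))
      (Real.exp (a * (x/(1+x))) * (1 / (1 - x/(1+x)) ^ n)) := by
  have h1x : (0:ℝ) < 1 + x := by linarith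
  set t : ℝ := x/(1+x) with htdef
  have ht0 : 0 ≤ t := by positivity
  have ht1 : t < 1 := by
    rw [htdef, div_lt_one h1x]; linarith
  clear_value t
  have hf : HasSum (fun i => rising n i * t ^ i / (i.factorial : ℝ)) (1 / (1 - t) ^ n) :=
    hasSum_rising n ht0 ht1
  have hg : HasSum (fun j => (a*t) ^ j / (j.factorial : ℝ)) (Real.exp (a*t)) :=
    hasSum_exp_series (a*t)
  have hfn : ∀ i, 0 ≤ rising n i * t ^ i / (i.factorial : ℝ) := by
    intro i
    have := rising_nonneg n i
    positivity
  have hgn : ∀ j, 0 ≤ (a*t) ^ j / (j.factorial : ℝ) := by intro j; positivity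
  have hfns : Summable (fun i => ‖rising n i * t ^ i / (i.factorial : ℝ)‖) := by
    refine hf.summable.congr fun i => ?_
    rw [Real.norm_of_nonneg (hfn i)]
  have hgns : Summable (fun j => ‖(a*t) ^ j / (j.factorial : ℝ)‖) := by
    refine hg.summable.congr fun j => ?_
    rw [Real.norm_of_nonneg (hgn j)]
  have H := hasSum_sum_range_mul_of_summable_norm' hfns hf.summable hgns hg.summable
  rw [hf.tsum_eq, hg.tsum_eq] at H
  have key : ∀ k, ∑ i ∈ Finset.range (k+1),
      (rising n i * t ^ i / (i.factorial : ℝ)) * ((a*t) ^ (k-i) / ((k-i).factorial : ℝ))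
      = pk n a k * t ^ k / (k.factorial : ℝ) := by
    intro k
    rw [pk, Finset.sum_mul, Finset.sum_div]
    apply Finset.sum_congr rfl
    intro i hi
    have hik : i ≤ k := by simpa using Nat.lt_succ_iff.mp (Finset.mem_range.mp hi)
    have hch : ((k).choose i : ℝ) * (i.factorial : ℝ) * ((k-i).factorial : ℝ)
        = (k.factorial : ℝ) := by
      exact_mod_cast Nat.choose_mul_factorial_mul_factorial hik
    have hi0 : (i.factorial : ℝ) ≠ 0 := by positivity
    have hki0 : ((k-i).factorial : ℝ) ≠ 0 := by positivity
    have hk0 : (k.factorial : ℝ) ≠ 0 := by positivity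
    have hpow : t ^ i * t ^ (k-i) = t ^ k := by
      rw [← pow_add]; congr 1; omega
    rw [mul_pow]
    field_simp
    rw [← hch, ← hpow]
    ring
  rw [show ((1 / (1 - t) ^ n) * Real.exp (a*t)) = Real.exp (a*t) * (1 / (1-t)^n) by ring] at H
  have heq : (fun k => ∑ i ∈ Finset.range (k+1),
      (rising n i * t ^ i / (i.factorial : ℝ)) * ((a*t) ^ (k-i) / ((k-i).factorial : ℝ)))
      = fun k => pk n a k * t ^ k / (k.factorial : ℝ) := funext key
  rw [heq] at H
  exact H

lemma hasSum_W (n : ℕ) {a x : ℝ} (ha : 0 ≤ a) (hx : 0 ≤ x) :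
    HasSum (W n a x) 1 := by
  have h1x : (0:ℝ) < 1 + x := by linarith
  have h1x' : (1:ℝ) + x ≠ 0 := ne_of_gt h1x
  have H := (pk_series n ha hx).mul_left
    (Real.exp (-(a * x) / (1 + x)) * (1 / (1+x) ^ n))
  have heq : (fun k => (Real.exp (-(a * x) / (1 + x)) * (1 / (1+x) ^ n)) *
      (pk n a k * (x/(1+x)) ^ k / (k.factorial : ℝ))) = W n a x := by
    funext k
    rw [W, div_pow, pow_add]
    field_simp
  rw [heq] at H
  have hval : (Real.exp (-(a * x) / (1 + x)) * (1 / (1+x) ^ n)) *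
      (Real.exp (a * (x/(1+x))) * (1 / (1 - x/(1+x)) ^ n)) = 1 := by
    have h1 : 1 - x/(1+x) = 1/(1+x) := by field_simp; ring
    rw [h1]
    rw [show Real.exp (-(a * x) / (1 + x)) * (1 / (1 + x) ^ n) *
        (Real.exp (a * (x / (1 + x))) * (1 / (1 / (1 + x)) ^ n)) =
        (Real.exp (-(a * x) / (1 + x)) * Real.exp (a * (x / (1 + x)))) *
        ((1 / (1 + x) ^ n) * (1 / (1 / (1 + x)) ^ n)) by ring, ← Real.exp_add]
    have h2 : -(a * x) / (1 + x) + a * (x / (1 + x)) = 0 := by field_simp; ring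
    rw [h2, Real.exp_zero, one_mul, one_div, one_div, ← mul_inv, ← mul_pow]
    simp [h1x']
  rw [hval] at H
  exact H

lemma pk_rec (n : ℕ) (a : ℝ) (k : ℕ) :
    pk n a (k+1) = a * pk n a k + (n:ℝ) * pk (n+1) a k := by
  rw [pk, Finset.sum_range_succ']
  have term0 : ((k+1).choose 0 : ℝ) * rising n 0 * a ^ (k+1-0) = a ^ (k+1) := by
    simp [rising_zero]
  rw [term0]
  have hsplit : ∀ i ∈ Finset.range (k+1),
      (((k+1).choose (i+1) : ℝ)) * rising n (i+1) * a ^ (k+1-(i+1))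
      = ((k.choose i : ℝ)) * ((n:ℝ) * rising (n+1) i) * a ^ (k-i)
        + ((k.choose (i+1) : ℝ)) * rising n (i+1) * a ^ (k-i) := by
    intro i hi
    rw [show k+1-(i+1) = k-i by omega, Nat.choose_succ_succ, rising_succ']
    push_cast [Nat.succ_eq_add_one]
    ring
  rw [Finset.sum_congr rfl hsplit, Finset.sum_add_distrib]
  have hS1 : ∑ i ∈ Finset.range (k+1),
      ((k.choose i : ℝ)) * ((n:ℝ) * rising (n+1) i) * a ^ (k-i)
      = (n:ℝ) * pk (n+1) a k := by
    rw [pk, Finset.mul_sum]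
    apply Finset.sum_congr rfl
    intro i _
    ring
  have hS2 : ∑ i ∈ Finset.range (k+1),
      ((k.choose (i+1) : ℝ)) * rising n (i+1) * a ^ (k-i) + a ^ (k+1)
      = a * pk n a k := by
    rw [pk, Finset.mul_sum]
    rw [Finset.sum_range_succ, Nat.choose_succ_self]
    have hterm : ∀ i ∈ Finset.range k,
        ((k.choose (i+1) : ℝ)) * rising n (i+1) * a ^ (k-i)
        = a * (((k.choose (i+1)) : ℝ) * rising n (i+1) * a ^ (k-(i+1))) := by
      intro i hi
      have hik : i < k := Finset.mem_range.mp hi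
      rw [show k - i = (k-(i+1)) + 1 by omega, pow_succ]
      ring
    rw [Finset.sum_congr rfl hterm]
    rw [show (∑ i ∈ Finset.range (k+1), a * (((k).choose i : ℝ) * rising n i * a ^ (k-i)))
        = ∑ i ∈ Finset.range (k+1), a * (((k).choose i : ℝ) * rising n i * a ^ (k-i)) from rfl]
    rw [Finset.sum_range_succ']
    simp [rising_zero, pow_succ]
    ring
  rw [hS1]
  rw [← hS2]
  ring

lemma W_rec (n : ℕ) {a x : ℝ} (hx : 0 ≤ x) (k : ℕ) :
    ((k:ℝ)+1) * W n a x (k+1)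
      = x * ((a/(1+x)) * W n a x k + (n:ℝ) * W (n+1) a x k) := by
  have h1x : (0:ℝ) < 1 + x := by linarith
  have h1x' : (1:ℝ) + x ≠ 0 := ne_of_gt h1x
  have hk0 : ((k.factorial : ℝ)) ≠ 0 := by positivity
  rw [W, W, W, pk_rec]
  rw [Nat.factorial_succ]
  push_cast
  rw [show k+1+n = (k+n)+1 by omega, show k+(n+1) = (k+n)+1 by omega]
  rw [pow_succ, pow_succ]
  field_simp

lemma moment_rec {a x : ℝ} (ha : 0 ≤ a) (hx : 0 ≤ x) (r : ℕ) (G : ℕ → ℝ)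
    (H : ∀ n : ℕ, HasSum (fun k => W n a x k * (k.descFactorial r : ℝ)) (G n)) :
    ∀ n : ℕ, HasSum (fun k => W n a x k * (k.descFactorial (r+1) : ℝ))
      (x * ((a/(1+x)) * G n + (n:ℝ) * G (n+1))) := by
  intro n
  have key : ∀ k : ℕ, W n a x (k+1) * ((k+1).descFactorial (r+1) : ℝ)
      = (x * (a/(1+x))) * (W n a x k * (k.descFactorial r : ℝ))
        + (x * (n:ℝ)) * (W (n+1) a x k * (k.descFactorial r : ℝ)) := by
    intro k
    rw [Nat.succ_descFactorial_succ]
    push_cast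
    rw [show W n a x (k+1) * (((k:ℝ)+1) * (k.descFactorial r : ℝ))
        = (((k:ℝ)+1) * W n a x (k+1)) * (k.descFactorial r : ℝ) by ring]
    rw [W_rec n hx k]
    ring
  have H2 : HasSum (fun k => W n a x (k+1) * ((k+1).descFactorial (r+1) : ℝ))
      (x * ((a/(1+x)) * G n + (n:ℝ) * G (n+1))) := by
    have := ((H n).mul_left (x * (a/(1+x)))).add ((H (n+1)).mul_left (x * (n:ℝ)))
    refine HasSum.congr_fun ?_ key
    rw [show x * ((a/(1+x)) * G n + (n:ℝ) * G (n+1)) = x * (a/(1+x)) * G n + x * (n:ℝ) * G (n+1) by ring]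
    exact this
  have h0 : W n a x 0 * ((Nat.descFactorial 0 (r+1) : ℕ) : ℝ) = 0 := by
    simp [Nat.descFactorial]
  rw [← hasSum_nat_add_iff' 1]
  simpa [h0] using H2

lemma dsc1_cast (k : ℕ) : ((k.descFactorial 1 : ℕ) : ℝ) = (k:ℝ) := by
  simp

lemma dsc2_cast (k : ℕ) : ((k.descFactorial 2 : ℕ) : ℝ) = (k:ℝ)^2 - (k:ℝ) := by
  cases k with
  | zero => simp
  | succ k =>
      rw [Nat.succ_descFactorial_succ, Nat.descFactorial_one]
      push_cast
      ring

lemma dsc3_cast (k : ℕ) : ((k.descFactorial 3 : ℕ) : ℝ)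
    = (k:ℝ)^3 - 3*(k:ℝ)^2 + 2*(k:ℝ) := by
  cases k with
  | zero => simp
  | succ k =>
      rw [Nat.succ_descFactorial_succ]
      push_cast [dsc2_cast]
      ring

lemma dsc4_cast (k : ℕ) : ((k.descFactorial 4 : ℕ) : ℝ)
    = (k:ℝ)^4 - 6*(k:ℝ)^3 + 11*(k:ℝ)^2 - 6*(k:ℝ) := by
  cases k with
  | zero => simp
  | succ k =>
      rw [Nat.succ_descFactorial_succ]
      push_cast [dsc3_cast]
      ring

section moments
variable {a x : ℝ} (ha : 0 ≤ a) (hx : 0 ≤ x)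
include ha hx

lemma M0 : ∀ n : ℕ, HasSum (fun k => W n a x k * (k.descFactorial 0 : ℝ)) 1 := by
  intro n
  simpa using hasSum_W n ha hx

lemma M1 : ∀ n : ℕ, HasSum (fun k => W n a x k * (k.descFactorial 1 : ℝ))
    (x * (a/(1+x) + (n:ℝ))) := by
  have h := moment_rec ha hx 0 _ (M0 ha hx)
  intro n
  convert h n using 1
  ring

lemma M2 : ∀ n : ℕ, HasSum (fun k => W n a x k * (k.descFactorial 2 : ℝ))
    (x^2 * ((a/(1+x))^2 + 2*(n:ℝ)*(a/(1+x)) + (n:ℝ)*((n:ℝ)+1))) := by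
  have h := moment_rec ha hx 1 _ (M1 ha hx)
  intro n
  convert h n using 1
  push_cast
  ring

lemma M3 : ∀ n : ℕ, HasSum (fun k => W n a x k * (k.descFactorial 3 : ℝ))
    (x^3 * ((a/(1+x))^3 + 3*(n:ℝ)*(a/(1+x))^2 + 3*(n:ℝ)*((n:ℝ)+1)*(a/(1+x))
      + (n:ℝ)*((n:ℝ)+1)*((n:ℝ)+2))) := by
  have h := moment_rec ha hx 2 _ (M2 ha hx)
  intro n
  convert h n using 1
  push_cast
  ring

lemma M4 : ∀ n : ℕ, HasSum (fun k => W n a x k * (k.descFactorial 4 : ℝ))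
    (x^4 * ((a/(1+x))^4 + 4*(n:ℝ)*(a/(1+x))^3 + 6*(n:ℝ)*((n:ℝ)+1)*(a/(1+x))^2
      + 4*(n:ℝ)*((n:ℝ)+1)*((n:ℝ)+2)*(a/(1+x))
      + (n:ℝ)*((n:ℝ)+1)*((n:ℝ)+2)*((n:ℝ)+3))) := by
  have h := moment_rec ha hx 3 _ (M3 ha hx)
  intro n
  convert h n using 1
  push_cast
  ring

end moments

noncomputable def Q1v (x c α β : ℝ) : ℝ := (1:ℝ)*x + (4:ℝ)*x*α + (6:ℝ)*x*α^2 + (7:ℝ)*x^2 + (-4:ℝ)*x^2*β + (12:ℝ)*x^2*α + (-12:ℝ)*x^2*α*β + (6:ℝ)*x^2*α^2 + (10:ℝ)*x^2*c + (12:ℝ)*x^2*c*α + (12:ℝ)*x^3 + (-12:ℝ)*x^3*β + (6:ℝ)*x^3*β^2 + (8:ℝ)*x^3*α + (-12:ℝ)*x^3*α*β + (18:ℝ)*x^3*c + (-12:ℝ)*x^3*c*β + (12:ℝ)*x^3*c*α + (6:ℝ)*x^3*c^2 + (6:ℝ)*x^4 + (-8:ℝ)*x^4*β + (6:ℝ)*x^4*β^2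 + (8:ℝ)*x^4*c + (-12:ℝ)*x^4*c*β + (6:ℝ)*x^4*c^2

noncomputable def Q0v (x c α β : ℝ) : ℝ := (1:ℝ)*α^4 + (-4:ℝ)*x*α^3*β + (1:ℝ)*x*c + (4:ℝ)*x*c*α + (6:ℝ)*x*c*α^2 + (4:ℝ)*x*c*α^3 + (6:ℝ)*x^2*α^2*β^2 + (-4:ℝ)*x^2*c*β + (-12:ℝ)*x^2*c*α*β + (-12:ℝ)*x^2*c*α^2*β + (7:ℝ)*x^2*c^2 + (12:ℝ)*x^2*c^2*α + (6:ℝ)*x^2*c^2*α^2 + (-4:ℝ)*x^3*α*β^3 + (6:ℝ)*x^3*c*β^2 + (12:ℝ)*x^3*c*α*β^2 + (-12:ℝ)*x^3*c^2*β + (-12:ℝ)*x^3*c^2*α*β + (6:ℝ)*x^3*c^3 + (4:ℝ)*x^3*c^3*α + (1:ℝ)*x^4*β^4 + (-4:ℝ)*x^4*c*β^3 + (6:ℝ)*x^4*c^2*β^2 + (-4:ℝ)*x^4*c^3*β + (1:ℝ)*x^4*c^4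

section central
variable {a x : ℝ} (ha : 0 ≤ a) (hx : 0 ≤ x)
include ha hx

lemma E1 (n : ℕ) : HasSum (fun k => W n a x k * (k:ℝ)) (x * (a/(1+x) + (n:ℝ))) := by
  refine HasSum.congr_fun (M1 ha hx n) fun k => ?_
  rw [dsc1_cast]

lemma E2 (n : ℕ) : HasSum (fun k => W n a x k * (k:ℝ)^2)
    (x^2 * ((a/(1+x))^2 + 2*(n:ℝ)*(a/(1+x)) + (n:ℝ)*((n:ℝ)+1)) + x * (a/(1+x) + (n:ℝ))) := by
  refine HasSum.congr_fun ((M2 ha hx n).add (M1 ha hx n)) fun k => ?_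
  rw [dsc2_cast, dsc1_cast]
  ring

lemma E3 (n : ℕ) : HasSum (fun k => W n a x k * (k:ℝ)^3)
    (x^3 * ((a/(1+x))^3 + 3*(n:ℝ)*(a/(1+x))^2 + 3*(n:ℝ)*((n:ℝ)+1)*(a/(1+x))
        + (n:ℝ)*((n:ℝ)+1)*((n:ℝ)+2))
      + 3 * (x^2 * ((a/(1+x))^2 + 2*(n:ℝ)*(a/(1+x)) + (n:ℝ)*((n:ℝ)+1)))
      + x * (a/(1+x) + (n:ℝ))) := by
  have h' : HasSum (fun k => W n a x k * (k:ℝ)^3) _ :=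
    HasSum.congr_fun ((M3 ha hx n).add (((M2 ha hx n).mul_left 3).add (M1 ha hx n)))
      fun k => by rw [dsc3_cast, dsc2_cast, dsc1_cast]; ring
  convert h' using 1
  ring

lemma E4 (n : ℕ) : HasSum (fun k => W n a x k * (k:ℝ)^4)
    (x^4 * ((a/(1+x))^4 + 4*(n:ℝ)*(a/(1+x))^3 + 6*(n:ℝ)*((n:ℝ)+1)*(a/(1+x))^2
        + 4*(n:ℝ)*((n:ℝ)+1)*((n:ℝ)+2)*(a/(1+x)) + (n:ℝ)*((n:ℝ)+1)*((n:ℝ)+2)*((n:ℝ)+3))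
      + 6 * (x^3 * ((a/(1+x))^3 + 3*(n:ℝ)*(a/(1+x))^2 + 3*(n:ℝ)*((n:ℝ)+1)*(a/(1+x))
        + (n:ℝ)*((n:ℝ)+1)*((n:ℝ)+2)))
      + 7 * (x^2 * ((a/(1+x))^2 + 2*(n:ℝ)*(a/(1+x)) + (n:ℝ)*((n:ℝ)+1)))
      + x * (a/(1+x) + (n:ℝ))) := by
  have h' : HasSum (fun k => W n a x k * (k:ℝ)^4) _ :=
    HasSum.congr_fun ((M4 ha hx n).add (((M3 ha hx n).mul_left 6).add
      (((M2 ha hx n).mul_left 7).add (M1 ha hx n))))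
      fun k => by rw [dsc4_cast, dsc3_cast, dsc2_cast, dsc1_cast]; ring
  convert h' using 1
  ring

variable {α β : ℝ}

lemma central1 (n : ℕ) (hN : ((n:ℝ)+β) ≠ 0) :
    HasSum (fun k => W n a x k * (((k:ℝ)+α)/((n:ℝ)+β) - x))
      ((α - β*x + (a/(1+x))*x) / ((n:ℝ)+β)) := by
  have h1x : (0:ℝ) < 1 + x := by linarith
  have h := ((E1 ha hx n).mul_left (1/((n:ℝ)+β))).add
    ((hasSum_W n ha hx).mul_left ((α - ((n:ℝ)+β)*x)/((n:ℝ)+β)))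
  have hval : (1/((n:ℝ)+β)) * (x * (a/(1+x) + (n:ℝ)))
      + ((α - ((n:ℝ)+β)*x)/((n:ℝ)+β)) * 1 = (α - β*x + (a/(1+x))*x) / ((n:ℝ)+β) := by
    field_simp
    ring
  rw [hval] at h
  refine HasSum.congr_fun h fun k => ?_
  field_simp
  ring

lemma central2 (n : ℕ) (hN : ((n:ℝ)+β) ≠ 0) :
    HasSum (fun k => W n a x k * (((k:ℝ)+α)/((n:ℝ)+β) - x)^2)
      (((x^2+x)*(n:ℝ) + ((α - β*x + (a/(1+x))*x)^2 + x*(a/(1+x)))) / ((n:ℝ)+β)^2) := by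
  have h1x : (0:ℝ) < 1 + x := by linarith
  have h := ((E2 ha hx n).mul_left (1/((n:ℝ)+β)^2)).add
    (((E1 ha hx n).mul_left (2*(α - ((n:ℝ)+β)*x)/((n:ℝ)+β)^2)).add
      ((hasSum_W n ha hx).mul_left ((α - ((n:ℝ)+β)*x)^2/((n:ℝ)+β)^2)))
  have hval : (1/((n:ℝ)+β)^2) * (x^2 * ((a/(1+x))^2 + 2*(n:ℝ)*(a/(1+x)) + (n:ℝ)*((n:ℝ)+1))
        + x * (a/(1+x) + (n:ℝ)))
      + ((2*(α - ((n:ℝ)+β)*x)/((n:ℝ)+β)^2) * (x * (a/(1+x) + (n:ℝ)))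
        + ((α - ((n:ℝ)+β)*x)^2/((n:ℝ)+β)^2) * 1)
      = ((x^2+x)*(n:ℝ) + ((α - β*x + (a/(1+x))*x)^2 + x*(a/(1+x)))) / ((n:ℝ)+β)^2 := by
    field_simp
    ring
  rw [hval] at h
  refine HasSum.congr_fun h fun k => ?_
  field_simp
  ring

lemma central4 (n : ℕ) (hN : ((n:ℝ)+β) ≠ 0) :
    HasSum (fun k => W n a x k * (((k:ℝ)+α)/((n:ℝ)+β) - x)^4)
      ((3*(x^2+x)^2*(n:ℝ)^2 + Q1v x (a/(1+x)) α β * (n:ℝ) + Q0v x (a/(1+x)) α β)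
        / ((n:ℝ)+β)^4) := by
  have h1x : (0:ℝ) < 1 + x := by linarith
  have h := ((E4 ha hx n).mul_left (1/((n:ℝ)+β)^4)).add
    (((E3 ha hx n).mul_left (4*(α - ((n:ℝ)+β)*x)/((n:ℝ)+β)^4)).add
      (((E2 ha hx n).mul_left (6*(α - ((n:ℝ)+β)*x)^2/((n:ℝ)+β)^4)).add
        (((E1 ha hx n).mul_left (4*(α - ((n:ℝ)+β)*x)^3/((n:ℝ)+β)^4)).add
          ((hasSum_W n ha hx).mul_left ((α - ((n:ℝ)+β)*x)^4/((n:ℝ)+β)^4)))))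
  set c : ℝ := a/(1+x) with hc
  have hval : (1/((n:ℝ)+β)^4) * (x^4 * (c^4 + 4*(n:ℝ)*c^3 + 6*(n:ℝ)*((n:ℝ)+1)*c^2
        + 4*(n:ℝ)*((n:ℝ)+1)*((n:ℝ)+2)*c + (n:ℝ)*((n:ℝ)+1)*((n:ℝ)+2)*((n:ℝ)+3))
      + 6 * (x^3 * (c^3 + 3*(n:ℝ)*c^2 + 3*(n:ℝ)*((n:ℝ)+1)*c + (n:ℝ)*((n:ℝ)+1)*((n:ℝ)+2)))
      + 7 * (x^2 * (c^2 + 2*(n:ℝ)*c + (n:ℝ)*((n:ℝ)+1))) + x * (c + (n:ℝ)))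
      + ((4*(α - ((n:ℝ)+β)*x)/((n:ℝ)+β)^4) * (x^3 * (c^3 + 3*(n:ℝ)*c^2
          + 3*(n:ℝ)*((n:ℝ)+1)*c + (n:ℝ)*((n:ℝ)+1)*((n:ℝ)+2))
        + 3 * (x^2 * (c^2 + 2*(n:ℝ)*c + (n:ℝ)*((n:ℝ)+1))) + x * (c + (n:ℝ)))
      + ((6*(α - ((n:ℝ)+β)*x)^2/((n:ℝ)+β)^4) * (x^2 * (c^2 + 2*(n:ℝ)*c + (n:ℝ)*((n:ℝ)+1))
          + x * (c + (n:ℝ)))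
      + ((4*(α - ((n:ℝ)+β)*x)^3/((n:ℝ)+β)^4) * (x * (c + (n:ℝ)))
        + ((α - ((n:ℝ)+β)*x)^4/((n:ℝ)+β)^4) * 1)))
      = (3*(x^2+x)^2*(n:ℝ)^2 + Q1v x c α β * (n:ℝ) + Q0v x c α β) / ((n:ℝ)+β)^4 := by
    clear_value c
    rw [Q1v, Q0v]
    field_simp
    ring
  rw [hval] at h
  refine HasSum.congr_fun h fun k => ?_
  field_simp
  ring

end central

lemma taylor_bound {f f' f'' : ℝ → ℝ} {x M : ℝ} (hx : 0 ≤ x)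
    (hd1 : ∀ t, 0 ≤ t → HasDerivAt f (f' t) t)
    (hd2 : ∀ t, 0 ≤ t → HasDerivAt f' (f'' t) t)
    (hM : ∀ t, 0 ≤ t → |f'' t| ≤ M)
    (hf''uc : UniformContinuousOn f'' (Set.Ici 0))
    {ε : ℝ} (hε : 0 < ε) :
    ∃ δ : ℝ, 0 < δ ∧ ∀ t, 0 ≤ t →
      |f t - f x - f' x * (t - x) - f'' x / 2 * (t - x)^2|
        ≤ ε * (t - x)^2 + (2*M/δ^2) * (t - x)^4 := by
  have hM0 : 0 ≤ M := le_trans (abs_nonneg _) (hM 0 le_rfl)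
  obtain ⟨δ0, hδ0, hδ⟩ := Metric.uniformContinuousOn_iff.mp hf''uc ε hε
  refine ⟨δ0/2, by linarith, fun t ht => ?_⟩
  set I : Set ℝ := Set.uIcc x t with hI
  have hIsub : I ⊆ Set.Ici 0 := by
    intro s hs
    rcases Set.mem_uIcc.mp hs with ⟨h1, h2⟩ | ⟨h1, h2⟩ <;> exact le_trans (by linarith) h1
  have hconv : Convex ℝ I := convex_uIcc x t
  have hxI : x ∈ I := Set.left_mem_uIcc
  have htI : t ∈ I := Set.right_mem_uIcc
  -- the uniform bound on |f'' s - f'' x| on I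
  set K : ℝ := if |t - x| ≤ δ0/2 then ε else 2*M with hK
  have hK0 : 0 ≤ K := by
    rw [hK]; split
    · exact le_of_lt hε
    · linarith
  have hKb : ∀ s ∈ I, |f'' s - f'' x| ≤ K := by
    intro s hs
    have hs0 : 0 ≤ s := hIsub hs
    have hsx : |s - x| ≤ |t - x| := by
      rw [abs_sub_le_iff]
      constructor
      · rcases le_total x t with h | h
        · rw [hI, Set.uIcc_of_le h] at hs
          rcases hs with ⟨h1, h2⟩
          rw [abs_of_nonneg (by linarith : (0:ℝ) ≤ t - x)]; linarith
        · rw [hI, Set.uIcc_of_ge h] at hs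
          rcases hs with ⟨h1, h2⟩
          rw [abs_of_nonpos (by linarith : t - x ≤ 0)]; linarith
      · rcases le_total x t with h | h
        · rw [hI, Set.uIcc_of_le h] at hs
          rcases hs with ⟨h1, h2⟩
          rw [abs_of_nonneg (by linarith : (0:ℝ) ≤ t - x)]; linarith
        · rw [hI, Set.uIcc_of_ge h] at hs
          rcases hs with ⟨h1, h2⟩
          rw [abs_of_nonpos (by linarith : t - x ≤ 0)]; linarith
    rw [hK]; split
    · rename_i hcase
      have hdist : dist s x < δ0 := by
        rw [Real.dist_eq]
        calc |s - x| ≤ |t - x| := hsx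
          _ ≤ δ0/2 := hcase
          _ < δ0 := by linarith
      have := hδ s hs0 x hx hdist
      rw [Real.dist_eq] at this
      exact le_of_lt this
    · calc |f'' s - f'' x| ≤ |f'' s| + |f'' x| := abs_sub _ _
        _ ≤ M + M := add_le_add (hM s hs0) (hM x hx)
        _ = 2*M := by ring
  -- step 1 : |f' s - f' x - f'' x * (s - x)| ≤ K * |s - x| on I
  have step1 : ∀ s ∈ I, |f' s - f' x - f'' x * (s - x)| ≤ K * |s - x| := by
    intro s hs
    have hd : ∀ u ∈ I, HasDerivWithinAt (fun u => f' u - f'' x * u) (f'' u - f'' x) I u := by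
      intro u hu
      have h0 : HasDerivAt (fun u => f' u - f'' x * u) (f'' u - f'' x) u := by
        exact ((hd2 u (hIsub hu)).sub ((hasDerivAt_id' u).const_mul (f'' x))).congr_deriv (by ring)
      exact h0.hasDerivWithinAt
    have := hconv.norm_image_sub_le_of_norm_hasDerivWithin_le hd
      (fun u hu => by rw [Real.norm_eq_abs]; exact hKb u hu) hxI hs
    rw [Real.norm_eq_abs, Real.norm_eq_abs] at this
    calc |f' s - f' x - f'' x * (s - x)|
        = |(f' s - f'' x * s) - (f' x - f'' x * x)| := by ring_nf
      _ ≤ K * |s - x| := this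
  -- step 2
  have step2 : |f t - f x - f' x * (t - x) - f'' x / 2 * (t - x)^2| ≤ (K * |t - x|) * |t - x| := by
    have hd : ∀ u ∈ I, HasDerivWithinAt
        (fun u => f u - f' x * u - f'' x / 2 * (u - x)^2)
        (f' u - f' x - f'' x * (u - x)) I u := by
      intro u hu
      have h1 : HasDerivAt (fun u : ℝ => f u - f' x * u - f'' x / 2 * (u - x)^2)
          (f' u - f' x - f'' x * (u - x)) u := by
        have hsq : HasDerivAt (fun u : ℝ => (u - x)^2) (2 * (u - x)) u := by
          exact (((hasDerivAt_id' u).sub_const x).pow 2).congr_deriv (by norm_num)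
        have := ((hd1 u (hIsub hu)).sub ((hasDerivAt_id u).const_mul (f' x))).sub
          (hsq.const_mul (f'' x / 2))
        exact this.congr_deriv (by ring)
      exact h1.hasDerivWithinAt
    have hb : ∀ u ∈ I, ‖f' u - f' x - f'' x * (u - x)‖ ≤ K * |t - x| := by
      intro u hu
      rw [Real.norm_eq_abs]
      refine le_trans (step1 u hu) (mul_le_mul_of_nonneg_left ?_ hK0)
      -- |u - x| ≤ |t - x|
      rcases le_total x t with h | h
      · rw [hI, Set.uIcc_of_le h] at hu
        rcases hu with ⟨h1, h2⟩
        rw [abs_of_nonneg (by linarith : (0:ℝ) ≤ t - x)]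
        rw [abs_le]; constructor <;> linarith
      · rw [hI, Set.uIcc_of_ge h] at hu
        rcases hu with ⟨h1, h2⟩
        rw [abs_of_nonpos (by linarith : t - x ≤ 0)]
        rw [abs_le]; constructor <;> linarith
    have := hconv.norm_image_sub_le_of_norm_hasDerivWithin_le hd hb hxI htI
    rw [Real.norm_eq_abs, Real.norm_eq_abs] at this
    calc |f t - f x - f' x * (t - x) - f'' x / 2 * (t - x)^2|
        = |(f t - f' x * t - f'' x / 2 * (t - x)^2) - (f x - f' x * x - f'' x / 2 * (x - x)^2)| := by
          ring_nf
      _ ≤ (K * |t - x|) * |t - x| := this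
  -- combine
  have habs2 : |t - x| * |t - x| = (t - x)^2 := by
    rw [← abs_mul, abs_of_nonneg (by nlinarith : (0:ℝ) ≤ (t-x)*(t-x))]
    ring
  rw [hK] at step2
  by_cases hcase : |t - x| ≤ δ0/2
  · rw [if_pos hcase] at step2
    have : ε * |t - x| * |t - x| = ε * (t - x)^2 := by rw [mul_assoc, habs2]
    have h4 : (0:ℝ) ≤ (2*M/(δ0/2)^2) * (t - x)^4 := by positivity
    calc |f t - f x - f' x * (t - x) - f'' x / 2 * (t - x)^2|
        ≤ ε * |t - x| * |t - x| := step2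
      _ = ε * (t - x)^2 := this
      _ ≤ ε * (t - x)^2 + (2*M/(δ0/2)^2) * (t - x)^4 := by linarith
  · rw [if_neg hcase] at step2
    push_neg at hcase
    have hδ2 : (0:ℝ) < δ0/2 := by linarith
    have hsq : (δ0/2)^2 ≤ (t - x)^2 := by
      rw [← habs2]
      nlinarith [abs_nonneg (t - x)]
    have key : 2*M * (t - x)^2 ≤ (2*M/(δ0/2)^2) * (t - x)^4 := by
      have h1 : 2*M*(t-x)^2*(δ0/2)^2 ≤ 2*M*(t-x)^2*(t-x)^2 :=
        mul_le_mul_of_nonneg_left hsq (by positivity)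
      rw [div_mul_eq_mul_div, le_div_iff₀ (by positivity)]
      nlinarith [h1]
    have heps : (0:ℝ) ≤ ε * (t - x)^2 := by positivity
    calc |f t - f x - f' x * (t - x) - f'' x / 2 * (t - x)^2|
        ≤ 2*M * |t - x| * |t - x| := step2
      _ = 2*M * (t - x)^2 := by rw [mul_assoc, habs2]
      _ ≤ (2*M/(δ0/2)^2) * (t - x)^4 := key
      _ ≤ ε * (t - x)^2 + (2*M/(δ0/2)^2) * (t - x)^4 := by linarith

section limits
variable {β : ℝ} (hβ : 0 ≤ β)
include hβ

lemma tendsto_s : Filter.Tendsto (fun n : ℕ => 1/((n:ℝ)+β)) Filter.atTop (nhds 0) := by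
  have h : Filter.Tendsto (fun n : ℕ => (n:ℝ)+β) Filter.atTop Filter.atTop :=
    Filter.tendsto_atTop_add_const_right _ β tendsto_natCast_atTop_atTop
  have := h.inv_tendsto_atTop; simp only [one_div]; exact this

lemma tendsto_r : Filter.Tendsto (fun n : ℕ => (n:ℝ)/((n:ℝ)+β)) Filter.atTop (nhds 1) := by
  have h : Filter.Tendsto (fun n : ℕ => 1 - β*(1/((n:ℝ)+β))) Filter.atTop (nhds 1) := by
    have h1 := (tendsto_s hβ).const_mul β
    have h2 : Filter.Tendsto (fun _ : ℕ => (1:ℝ)) Filter.atTop (nhds 1) := tendsto_const_nhds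
    simpa using h2.sub h1
  refine h.congr' ?_
  filter_upwards [Filter.eventually_ge_atTop 1] with n hn
  have hN : (0:ℝ) < (n:ℝ)+β := by
    have : (1:ℝ) ≤ (n:ℝ) := by exact_mod_cast hn
    linarith
  field_simp; ring

end limits

section ratlimits
variable {β : ℝ} (hβ : 0 ≤ β)
include hβ

lemma tendsto_nV2 (A K : ℝ) :
    Filter.Tendsto (fun n : ℕ => (n:ℝ) * ((A*(n:ℝ) + K)/((n:ℝ)+β)^2))
      Filter.atTop (nhds A) := by
  have h : Filter.Tendsto (fun n : ℕ =>
      A * ((n:ℝ)/((n:ℝ)+β) * ((n:ℝ)/((n:ℝ)+β))) + K * ((n:ℝ)/((n:ℝ)+β) * (1/((n:ℝ)+β))))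
      Filter.atTop (nhds (A * (1*1) + K * (1*0))) :=
    (((tendsto_r hβ).mul (tendsto_r hβ)).const_mul A).add
      (((tendsto_r hβ).mul (tendsto_s hβ)).const_mul K)
  have h2 : Filter.Tendsto (fun n : ℕ =>
      A * ((n:ℝ)/((n:ℝ)+β) * ((n:ℝ)/((n:ℝ)+β))) + K * ((n:ℝ)/((n:ℝ)+β) * (1/((n:ℝ)+β))))
      Filter.atTop (nhds A) := by
    convert h using 2; ring
  refine h2.congr' ?_
  filter_upwards [Filter.eventually_ge_atTop 1] with n hn
  have hN : (0:ℝ) < (n:ℝ)+β := by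
    have : (1:ℝ) ≤ (n:ℝ) := by exact_mod_cast hn
    linarith
  field_simp

lemma tendsto_n2V4 (A Q1 Q0 : ℝ) :
    Filter.Tendsto (fun n : ℕ => (n:ℝ)^2 * ((A*(n:ℝ)^2 + Q1*(n:ℝ) + Q0)/((n:ℝ)+β)^4))
      Filter.atTop (nhds A) := by
  set r : ℕ → ℝ := fun n => (n:ℝ)/((n:ℝ)+β) with hrdef
  set s : ℕ → ℝ := fun n => 1/((n:ℝ)+β) with hsdef
  have h : Filter.Tendsto (fun n : ℕ =>
      A * (r n * r n * r n * r n) + Q1 * (r n * r n * r n * s n)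
        + Q0 * (r n * r n * (s n * s n)))
      Filter.atTop (nhds (A * (1*1*1*1) + Q1 * (1*1*1*0) + Q0 * (1*1*(0*0)))) := by
    have hr := tendsto_r hβ
    have hs := tendsto_s hβ
    exact ((((hr.mul hr).mul hr).mul hr).const_mul A).add
      ((((hr.mul hr).mul hr).mul hs).const_mul Q1) |>.add
      (((hr.mul hr).mul (hs.mul hs)).const_mul Q0)
  have h2 : Filter.Tendsto (fun n : ℕ =>
      A * (r n * r n * r n * r n) + Q1 * (r n * r n * r n * s n)
        + Q0 * (r n * r n * (s n * s n)))
      Filter.atTop (nhds A) := by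
    convert h using 2; ring
  refine h2.congr' ?_
  filter_upwards [Filter.eventually_ge_atTop 1] with n hn
  have hN : (0:ℝ) < (n:ℝ)+β := by
    have : (1:ℝ) ≤ (n:ℝ) := by exact_mod_cast hn
    linarith
  rw [hrdef, hsdef]
  field_simp

end ratlimits

theorem stancu_voronovskaya (a x α β : ℝ) (ha : 0 ≤ a) (hx : 0 ≤ x)
    (hα : 0 ≤ α) (hαβ : α ≤ β)
    (f f' f'' : ℝ → ℝ)
    (hfb : ∃ M : ℝ, ∀ t, 0 ≤ t → |f t| ≤ M)
    (hd1 : ∀ t, 0 ≤ t → HasDerivAt f (f' t) t)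
    (hd2 : ∀ t, 0 ≤ t → HasDerivAt f' (f'' t) t)
    (hf''b : ∃ M : ℝ, ∀ t, 0 ≤ t → |f'' t| ≤ M)
    (hf''uc : UniformContinuousOn f'' (Set.Ici 0)) :
    Filter.Tendsto (fun n : ℕ => (n : ℝ) * (L n a α β f x - f x)) Filter.atTop
      (nhds ((α - β * x + a * x / (1 + x)) * f' x + ((x ^ 2 + x) / 2) * f'' x)) := by
  obtain ⟨Mf, hMf⟩ := hfb
  obtain ⟨Mb, hMb⟩ := hf''b
  have hβ : 0 ≤ β := le_trans hα hαβ
  have h1x : (0:ℝ) < 1 + x := by linarith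
  have hMb0 : 0 ≤ Mb := le_trans (abs_nonneg _) (hMb 0 le_rfl)
  -- abbreviations
  set γ' : ℝ := α - β*x + a/(1+x)*x with hγ'
  set K : ℝ := γ'^2 + x*(a/(1+x)) with hK
  set QA : ℝ := Q1v x (a/(1+x)) α β with hQA
  set QB : ℝ := Q0v x (a/(1+x)) α β with hQB
  set V2 : ℕ → ℝ := fun n => ((x^2+x)*(n:ℝ) + K)/((n:ℝ)+β)^2 with hV2
  set V4 : ℕ → ℝ := fun n => (3*(x^2+x)^2*(n:ℝ)^2 + QA*(n:ℝ) + QB)/((n:ℝ)+β)^4 with hV4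
  have hNpos : ∀ n : ℕ, 1 ≤ n → (0:ℝ) < (n:ℝ)+β := by
    intro n hn
    have : (1:ℝ) ≤ (n:ℝ) := by exact_mod_cast hn
    linarith
  have htk0 : ∀ n : ℕ, 1 ≤ n → ∀ k : ℕ, 0 ≤ ((k:ℝ)+α)/((n:ℝ)+β) := by
    intro n hn k
    have h1 := hNpos n hn
    have h2 : (0:ℝ) ≤ (k:ℝ)+α := by positivity
    positivity
  -- summability of the f-part
  have hsumf : ∀ n : ℕ, 1 ≤ n →
      Summable (fun k => W n a x k * f (((k:ℝ)+α)/((n:ℝ)+β))) := by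
    intro n hn
    apply Summable.of_norm
    refine Summable.of_nonneg_of_le (fun k => norm_nonneg _) (fun k => ?_)
      (((hasSum_W n ha hx).summable).mul_right Mf)
    rw [Real.norm_eq_abs, abs_mul, abs_of_nonneg (W_nonneg n ha hx k)]
    exact mul_le_mul_of_nonneg_left (hMf _ (htk0 n hn k)) (W_nonneg n ha hx k)
  -- the decomposition HasSum
  have hrem : ∀ n : ℕ, 1 ≤ n →
      HasSum (fun k => W n a x k *
        (f (((k:ℝ)+α)/((n:ℝ)+β)) - f x - f' x * ((((k:ℝ)+α)/((n:ℝ)+β)) - x)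
          - f'' x/2 * ((((k:ℝ)+α)/((n:ℝ)+β)) - x)^2))
        (L n a α β f x - f x - f' x * (γ'/((n:ℝ)+β)) - f'' x/2 * V2 n) := by
    intro n hn
    have hN := hNpos n hn
    have hLf : HasSum (fun k => W n a x k * f (((k:ℝ)+α)/((n:ℝ)+β))) (L n a α β f x) :=
      (hsumf n hn).hasSum
    have h := ((hLf.sub ((hasSum_W n ha hx).mul_left (f x))).sub
      ((central1 ha hx (α := α) (β := β) n hN.ne').mul_left (f' x))).sub
      ((central2 ha hx (α := α) (β := β) n hN.ne').mul_left (f'' x/2))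
    have hval : L n a α β f x - f x - f' x * (γ'/((n:ℝ)+β)) - f'' x/2 * V2 n
        = ((L n a α β f x - f x * 1) - f' x * ((α - β*x + a/(1+x)*x) / ((n:ℝ)+β)))
          - f'' x/2 * (((x^2+x)*(n:ℝ) + ((α - β*x + a/(1+x)*x)^2 + x*(a/(1+x))))
            / ((n:ℝ)+β)^2) := by
      simp only [hV2, hK, hγ']
      ring
    rw [hval]
    exact HasSum.congr_fun h (fun k => by ring)
  -- Claim 2 : deterministic part
  have claim2 : Filter.Tendsto
      (fun n : ℕ => (n:ℝ) * (f' x * (γ'/((n:ℝ)+β)) + f'' x/2 * V2 n)) Filter.atTop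
      (nhds ((α - β * x + a * x / (1 + x)) * f' x + ((x ^ 2 + x) / 2) * f'' x)) := by
    have h1 : Filter.Tendsto (fun n : ℕ => (n:ℝ) * (γ'/((n:ℝ)+β))) Filter.atTop (nhds γ') := by
      have := (tendsto_r hβ).const_mul γ'
      rw [mul_one] at this
      refine this.congr fun n => by ring
    have h2 : Filter.Tendsto (fun n : ℕ => (n:ℝ) * V2 n) Filter.atTop (nhds (x^2+x)) := by
      rw [hV2]
      exact tendsto_nV2 hβ (x^2+x) K
    have h := (h1.const_mul (f' x)).add (h2.const_mul (f'' x/2))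
    have hval : f' x * γ' + f'' x/2 * (x^2+x)
        = (α - β * x + a * x / (1 + x)) * f' x + ((x ^ 2 + x) / 2) * f'' x := by
      rw [hγ']; ring
    rw [hval] at h
    refine h.congr fun n => by ring
  -- Claim 1 : remainder part
  have claim1 : Filter.Tendsto
      (fun n : ℕ => (n:ℝ) * (L n a α β f x - f x - f' x * (γ'/((n:ℝ)+β)) - f'' x/2 * V2 n))
      Filter.atTop (nhds 0) := by
    rw [NormedAddCommGroup.tendsto_nhds_zero]
    intro ε0 hε0
    have hden : (0:ℝ) < 2*(x^2+x) + 2 := by nlinarith [sq_nonneg x]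
    set ε : ℝ := ε0 / (2*(x^2+x) + 2) with hε
    have hεpos : 0 < ε := by positivity
    obtain ⟨δ, hδpos, htb⟩ := taylor_bound hx hd1 hd2 hMb hf''uc hεpos
    set Kc : ℝ := 2*Mb/δ^2 with hKc
    have hKc0 : 0 ≤ Kc := by positivity
    -- bound for each n ≥ 1
    have hbound : ∀ n : ℕ, 1 ≤ n →
        |L n a α β f x - f x - f' x * (γ'/((n:ℝ)+β)) - f'' x/2 * V2 n|
          ≤ ε * V2 n + Kc * V4 n := by
      intro n hn
      have hN := hNpos n hn
      have hS2 := central2 ha hx (α := α) (β := β) n hN.ne'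
      have hS4 := central4 ha hx (α := α) (β := β) n hN.ne'
      have hS2' : HasSum (fun k => W n a x k * ((((k:ℝ)+α)/((n:ℝ)+β)) - x)^2) (V2 n) := by
        simp only [hV2, hK, hγ']
        exact hS2
      have hS4' : HasSum (fun k => W n a x k * ((((k:ℝ)+α)/((n:ℝ)+β)) - x)^4) (V4 n) := by
        simp only [hV4, hQA, hQB]
        exact hS4
      have hSb := (hS2'.mul_left ε).add (hS4'.mul_left Kc)
      have hpt : ∀ k : ℕ, ‖W n a x k *
          (f (((k:ℝ)+α)/((n:ℝ)+β)) - f x - f' x * ((((k:ℝ)+α)/((n:ℝ)+β)) - x)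
            - f'' x/2 * ((((k:ℝ)+α)/((n:ℝ)+β)) - x)^2)‖
          ≤ ε * (W n a x k * ((((k:ℝ)+α)/((n:ℝ)+β)) - x)^2)
            + Kc * (W n a x k * ((((k:ℝ)+α)/((n:ℝ)+β)) - x)^4) := by
        intro k
        rw [Real.norm_eq_abs, abs_mul, abs_of_nonneg (W_nonneg n ha hx k)]
        have h := htb _ (htk0 n hn k)
        calc W n a x k * |f (((k:ℝ)+α)/((n:ℝ)+β)) - f x
              - f' x * ((((k:ℝ)+α)/((n:ℝ)+β)) - x)
              - f'' x/2 * ((((k:ℝ)+α)/((n:ℝ)+β)) - x)^2|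
            ≤ W n a x k * (ε * ((((k:ℝ)+α)/((n:ℝ)+β)) - x)^2
              + Kc * ((((k:ℝ)+α)/((n:ℝ)+β)) - x)^4) := by
              refine mul_le_mul_of_nonneg_left ?_ (W_nonneg n ha hx k)
              rw [hKc]
              exact h
          _ = ε * (W n a x k * ((((k:ℝ)+α)/((n:ℝ)+β)) - x)^2)
              + Kc * (W n a x k * ((((k:ℝ)+α)/((n:ℝ)+β)) - x)^4) := by ring
      have hnormsum : Summable (fun k => ‖W n a x k *
          (f (((k:ℝ)+α)/((n:ℝ)+β)) - f x - f' x * ((((k:ℝ)+α)/((n:ℝ)+β)) - x)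
            - f'' x/2 * ((((k:ℝ)+α)/((n:ℝ)+β)) - x)^2)‖) :=
        Summable.of_nonneg_of_le (fun k => norm_nonneg _) hpt hSb.summable
      have heq : L n a α β f x - f x - f' x * (γ'/((n:ℝ)+β)) - f'' x/2 * V2 n
          = ∑' k, (W n a x k *
            (f (((k:ℝ)+α)/((n:ℝ)+β)) - f x - f' x * ((((k:ℝ)+α)/((n:ℝ)+β)) - x)
              - f'' x/2 * ((((k:ℝ)+α)/((n:ℝ)+β)) - x)^2)) := (hrem n hn).tsum_eq.symm
      rw [heq]
      calc |∑' k, (W n a x k *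
            (f (((k:ℝ)+α)/((n:ℝ)+β)) - f x - f' x * ((((k:ℝ)+α)/((n:ℝ)+β)) - x)
              - f'' x/2 * ((((k:ℝ)+α)/((n:ℝ)+β)) - x)^2))|
          ≤ ∑' k, ‖W n a x k *
            (f (((k:ℝ)+α)/((n:ℝ)+β)) - f x - f' x * ((((k:ℝ)+α)/((n:ℝ)+β)) - x)
              - f'' x/2 * ((((k:ℝ)+α)/((n:ℝ)+β)) - x)^2)‖ := by
            rw [← Real.norm_eq_abs]
            exact norm_tsum_le_tsum_norm hnormsum
        _ ≤ ∑' k, (ε * (W n a x k * ((((k:ℝ)+α)/((n:ℝ)+β)) - x)^2)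
              + Kc * (W n a x k * ((((k:ℝ)+α)/((n:ℝ)+β)) - x)^4)) :=
            Summable.tsum_le_tsum hpt hnormsum hSb.summable
        _ = ε * V2 n + Kc * V4 n := hSb.tsum_eq
    -- limit of the bound
    have hA2 : Filter.Tendsto (fun n : ℕ => (n:ℝ) * V2 n) Filter.atTop (nhds (x^2+x)) := by
      rw [hV2]; exact tendsto_nV2 hβ (x^2+x) K
    have hA4 : Filter.Tendsto (fun n : ℕ => (n:ℝ)^2 * V4 n) Filter.atTop
        (nhds (3*(x^2+x)^2)) := by
      rw [hV4]; exact tendsto_n2V4 hβ (3*(x^2+x)^2) QA QB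
    have h1n : Filter.Tendsto (fun n : ℕ => 1/(n:ℝ)) Filter.atTop (nhds 0) :=
      tendsto_one_div_atTop_nhds_zero_nat
    have hB : Filter.Tendsto (fun n : ℕ => ε * ((n:ℝ) * V2 n)
        + Kc * ((1/(n:ℝ)) * ((n:ℝ)^2 * V4 n))) Filter.atTop
        (nhds (ε * (x^2+x) + Kc * (0 * (3*(x^2+x)^2)))) :=
      (hA2.const_mul ε).add ((h1n.mul hA4).const_mul Kc)
    have hlt : ε * (x^2+x) + Kc * (0 * (3*(x^2+x)^2)) < ε0 := by
      rw [hε]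
      rw [zero_mul, mul_zero, add_zero]
      rw [div_mul_eq_mul_div, div_lt_iff₀ hden]
      nlinarith [sq_nonneg x, hε0]
    filter_upwards [Filter.eventually_ge_atTop 1, hB.eventually (gt_mem_nhds hlt)]
      with n hn hBn
    have hN := hNpos n hn
    have hn1 : (1:ℝ) ≤ (n:ℝ) := by exact_mod_cast hn
    have hnne : (n:ℝ) ≠ 0 := by linarith
    rw [Real.norm_eq_abs, abs_mul, abs_of_nonneg (by positivity : (0:ℝ) ≤ (n:ℝ))]
    calc (n:ℝ) * |L n a α β f x - f x - f' x * (γ'/((n:ℝ)+β)) - f'' x/2 * V2 n|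
        ≤ (n:ℝ) * (ε * V2 n + Kc * V4 n) :=
          mul_le_mul_of_nonneg_left (hbound n hn) (by positivity)
      _ = ε * ((n:ℝ) * V2 n) + Kc * ((1/(n:ℝ)) * ((n:ℝ)^2 * V4 n)) := by
          field_simp
      _ < ε0 := hBn
  -- combine
  have := claim1.add claim2
  rw [zero_add] at this
  refine this.congr fun n => by ring
end
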